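/- Let p ∈ [1, 2], let m ≥ 1 be an integer and N an integer with N > m, and set α = (1/m)(1/2 − p/4). Then the minimum M(1/m, p, N) of ∑_{i=1}^N f(t_i), where f(t) = (t/(1/m − t))^{p/2}, over all tuples (t_1, …, t_N) with t_i ∈ [0, 1/m) and ∑ t_i = 1, is attained at a tuple which, after permuting coordinates, has one of the following two forms: (i) t_1 = … = t_k = 1/k and t_{k+1} = … = t_N = 0 for some k with 1/k ≥ α; or (ii) t_1 = … = t_k = x, t_{k+1} = 1 − kx, and t_{k+2} = … = t_N = 0 for some k and some x with x ≥ α and 0 < 1 − kx < α. -/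

import Mathlib

open Real Set

section Helpers
variable {c q : ℝ}
/-- the objective single-variable function -/
noncomputable def Mfun (c q t : ℝ) : ℝ := (t / (c - t)) ^ q

lemma Mfun_zero (hq : q ≠ 0) : Mfun c q 0 = 0 := by
  simp [Mfun, Real.zero_rpow hq]

lemma Mfun_nonneg (hc : 0 ≤ c) (t : ℝ) (ht : 0 ≤ t) (htc : t < c) : 0 ≤ Mfun c q t :=
  Real.rpow_nonneg (div_nonneg ht (by linarith)) q

lemma Mfun_pos (hq : 0 < q) {t : ℝ} (ht : 0 < t) (htc : t < c) : 0 < Mfun c q t :=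
  Real.rpow_pos_of_pos (div_pos ht (by linarith)) q

lemma Mfun_mono (hq : 0 ≤ q) {u v : ℝ} (hu : 0 ≤ u) (huv : u ≤ v) (hv : v < c) :
    Mfun c q u ≤ Mfun c q v := by
  have hvc : 0 < c - v := by linarith
  have huc : 0 < c - u := by linarith
  apply Real.rpow_le_rpow (div_nonneg hu (le_of_lt huc)) _ hq
  rw [div_le_div_iff₀ huc hvc]
  nlinarith

lemma Mfun_continuousOn (hq : 0 ≤ q) : ContinuousOn (Mfun c q) (Iio c) := by
  apply ContinuousOn.rpow_const
  · apply ContinuousOn.div continuousOn_id (continuousOn_const.sub continuousOn_id)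
    intro x hx
    simp only [mem_Iio] at hx
    intro h
    have := sub_eq_zero.mp h
    simp only [id_eq] at this
    linarith
  · exact fun x _ => Or.inr hq

/-- first derivative of Mfun -/
noncomputable def Md1 (c q t : ℝ) : ℝ := q * (1 / t + 1 / (c - t))

lemma Mfun_eq_exp {t : ℝ} (ht : 0 < t) (htc : t < c) :
    Mfun c q t = Real.exp (q * (Real.log t - Real.log (c - t))) := by
  have h1 : 0 < c - t := by linarith
  rw [Mfun, Real.rpow_def_of_pos (div_pos ht h1), Real.log_div (ne_of_gt ht) (ne_of_gt h1)]
  ring_nf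

lemma Mfun_hasDerivAt {t : ℝ} (ht : 0 < t) (htc : t < c) :
    HasDerivAt (Mfun c q) (Mfun c q t * Md1 c q t) t := by
  have h1 : 0 < c - t := by linarith
  have hinner : HasDerivAt (fun s => q * (Real.log s - Real.log (c - s)))
      (q * (1 / t + 1 / (c - t))) t := by
    have hlog1 : HasDerivAt Real.log t⁻¹ t := Real.hasDerivAt_log (ne_of_gt ht)
    have hsub : HasDerivAt (fun s : ℝ => c - s) (-1) t := by
      simpa using (hasDerivAt_id t).const_sub c
    have hlog2 : HasDerivAt (fun s => Real.log (c - s)) (-1 / (c - t)) t := by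
      simpa using (hsub.log (ne_of_gt h1))
    have := (hlog1.sub hlog2).const_mul q
    refine this.congr_deriv ?_
    field_simp
    ring
  have hexp : HasDerivAt (fun s => Real.exp (q * (Real.log s - Real.log (c - s))))
      (Real.exp (q * (Real.log t - Real.log (c - t))) * (q * (1 / t + 1 / (c - t)))) t :=
    hinner.exp
  rw [← Mfun_eq_exp ht htc] at hexp
  apply hexp.congr_of_eventuallyEq
  filter_upwards [IsOpen.mem_nhds (isOpen_Ioo (a := (0:ℝ)) (b := c)) ⟨ht, htc⟩] with s hs
  exact Mfun_eq_exp hs.1 hs.2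

lemma Mfun_deriv_eq {t : ℝ} (ht : 0 < t) (htc : t < c) :
    deriv (Mfun c q) t = Mfun c q t * Md1 c q t := (Mfun_hasDerivAt ht htc).deriv

lemma Mfun_deriv2 {t : ℝ} (ht : 0 < t) (htc : t < c) :
    deriv^[2] (Mfun c q) t
      = Mfun c q t * Md1 c q t * Md1 c q t
        + Mfun c q t * (q * (1 / (c - t) ^ 2 - 1 / t ^ 2)) := by
  have h1 : 0 < c - t := by linarith
  have hprod : HasDerivAt (fun s => Mfun c q s * Md1 c q s)
      (Mfun c q t * Md1 c q t * Md1 c q t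
        + Mfun c q t * (q * (1 / (c - t) ^ 2 - 1 / t ^ 2))) t := by
    have hd1 : HasDerivAt (fun s => Md1 c q s) (q * (1 / (c - t) ^ 2 - 1 / t ^ 2)) t := by
      have hinv1 : HasDerivAt (fun s : ℝ => 1 / s) (-1 / t ^ 2) t := by
        have := hasDerivAt_inv (ne_of_gt ht)
        rw [show (fun s : ℝ => 1 / s) = fun s => s⁻¹ from funext fun s => one_div s]
        exact this.congr_deriv (by ring)
      have hsub : HasDerivAt (fun s : ℝ => c - s) (-1) t := by
        simpa using (hasDerivAt_id t).const_sub c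
      have hinv2 : HasDerivAt (fun s : ℝ => 1 / (c - s)) (1 / (c - t) ^ 2) t := by
        have h := (hasDerivAt_inv (ne_of_gt h1)).comp t hsub
        rw [show (fun s : ℝ => 1 / (c - s)) = (fun y => y⁻¹) ∘ HSub.hSub c from
          funext fun s => by rw [one_div]; rfl]
        exact h.congr_deriv (by ring)
      have := (hinv1.add hinv2).const_mul q
      refine this.congr_deriv ?_
      ring
    exact (Mfun_hasDerivAt ht htc).mul hd1
  have heq : deriv (Mfun c q) =ᶠ[nhds t] (fun s => Mfun c q s * Md1 c q s) := by
    filter_upwards [IsOpen.mem_nhds (isOpen_Ioo (a := (0:ℝ)) (b := c)) ⟨ht, htc⟩] with s hs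
    exact Mfun_deriv_eq hs.1 hs.2
  have : HasDerivAt (deriv (Mfun c q))
      (Mfun c q t * Md1 c q t * Md1 c q t
        + Mfun c q t * (q * (1 / (c - t) ^ 2 - 1 / t ^ 2))) t :=
    hprod.congr_of_eventuallyEq heq
  simpa [Function.iterate_succ, Function.iterate_one] using this.deriv

lemma Mfun_deriv2_factored {t : ℝ} (ht : 0 < t) (htc : t < c) :
    deriv^[2] (Mfun c q) t
      = Mfun c q t * q * ((1 / t + 1 / (c - t)) * ((2 * t - (1 - q) * c) / (t * (c - t)))) := by
  rw [Mfun_deriv2 ht htc, Md1]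
  have h1 : c - t ≠ 0 := by intro h; have := sub_eq_zero.mp h; linarith
  field_simp
  ring

lemma Mfun_deriv2_pos (hq0 : 0 < q) {t : ℝ} (ht : c * (1 - q) / 2 < t) (ht0 : 0 < t)
    (htc : t < c) : 0 < deriv^[2] (Mfun c q) t := by
  rw [Mfun_deriv2_factored ht0 htc]
  have h1 : 0 < c - t := by linarith
  have hf := Mfun_pos hq0 ht0 htc (c := c)
  have hsum : 0 < 1 / t + 1 / (c - t) := by positivity
  have hnum : 0 < 2 * t - (1 - q) * c := by linarith
  have hden : 0 < t * (c - t) := by positivity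
  positivity

lemma Mfun_deriv2_neg (hq0 : 0 < q) {t : ℝ} (ht0 : 0 < t) (ht : t < c * (1 - q) / 2)
    (hq1 : q ≤ 1) (hc : 0 < c) : deriv^[2] (Mfun c q) t < 0 := by
  have htc : t < c := by nlinarith
  rw [Mfun_deriv2_factored ht0 htc]
  have h1 : 0 < c - t := by linarith
  have hf := Mfun_pos hq0 ht0 htc (c := c)
  have hsum : 0 < 1 / t + 1 / (c - t) := by positivity
  have hnum : 2 * t - (1 - q) * c < 0 := by linarith
  have hden : 0 < t * (c - t) := by positivity
  have : (2 * t - (1 - q) * c) / (t * (c - t)) < 0 := div_neg_of_neg_of_pos hnum hden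
  have h2 : (1 / t + 1 / (c - t)) * ((2 * t - (1 - q) * c) / (t * (c - t))) < 0 :=
    mul_neg_of_pos_of_neg hsum this
  have h3 : 0 < Mfun c q t * q := by positivity
  exact mul_neg_of_pos_of_neg h3 h2

lemma Mfun_strictConvexOn (hc : 0 < c) (hq0 : 0 < q) (hq1 : q ≤ 1) :
    StrictConvexOn ℝ (Ico (c * (1 - q) / 2) c) (Mfun c q) := by
  apply strictConvexOn_of_deriv2_pos (convex_Ico _ _)
  · exact (Mfun_continuousOn (le_of_lt hq0)).mono (fun x hx => hx.2)
  · intro x hx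
    rw [interior_Ico] at hx
    have hx0 : 0 < x := lt_of_le_of_lt (by nlinarith : (0:ℝ) ≤ c * (1 - q) / 2) hx.1
    exact Mfun_deriv2_pos hq0 hx.1 hx0 hx.2

lemma Mfun_strictConcaveOn (hc : 0 < c) (hq0 : 0 < q) (hq1 : q ≤ 1) :
    StrictConcaveOn ℝ (Icc 0 (c * (1 - q) / 2)) (Mfun c q) := by
  apply strictConcaveOn_of_deriv2_neg (convex_Icc _ _)
  · apply (Mfun_continuousOn (le_of_lt hq0)).mono
    intro x hx
    simp only [mem_Icc] at hx
    simp only [mem_Iio]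
    nlinarith [hx.2]
  · intro x hx
    rw [interior_Icc] at hx
    exact Mfun_deriv2_neg hq0 hx.1 hx.2 hq1 hc



lemma exists_minimizer (N : ℕ) (hN : 0 < N) (hc : 0 < c) (hq0 : 0 < q)
    (hNc : 1 / (N : ℝ) < c) :
    ∃ t : Fin N → ℝ, (∀ i, 0 ≤ t i ∧ t i < c) ∧ (∑ i, t i = 1) ∧
      ∀ s : Fin N → ℝ, (∀ i, 0 ≤ s i ∧ s i < c) → (∑ i, s i = 1) →
        ∑ i, Mfun c q (t i) ≤ ∑ i, Mfun c q (s i) := by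
  have hN0 : (0:ℝ) < N := by exact_mod_cast hN
  set t₀ : Fin N → ℝ := fun _ => 1 / N with ht₀
  have ht₀sum : ∑ i, t₀ i = 1 := by
    simp [ht₀, Finset.sum_const, Finset.card_univ]
    field_simp
  set V₀ : ℝ := ∑ i, Mfun c q (t₀ i) with hV₀
  have hV₀nonneg : 0 ≤ V₀ := Finset.sum_nonneg fun i _ =>
    Mfun_nonneg hc.le _ (by positivity) (by simpa [ht₀] using hNc)
  set R : ℝ := max ((1/N) / (c - 1/N)) (max 1 ((V₀ + 1) ^ (q⁻¹ : ℝ))) with hR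
  have hR1 : (1:ℝ) ≤ R := le_trans (le_max_left _ _) (le_max_right _ _)
  have hR0 : (0:ℝ) < R := by linarith
  set b : ℝ := c * R / (R + 1) with hb
  have hbc : b < c := by
    rw [hb, div_lt_iff₀ (by linarith)]
    nlinarith
  have hb0 : 0 < b := by
    rw [hb]; positivity
  have hbN : 1 / (N:ℝ) ≤ b := by
    have hR₀ : (1/N) / (c - 1/N) ≤ R := le_trans (le_max_left _ _) le_rfl
    rw [hb, le_div_iff₀ (by linarith)]
    have hcN : 0 < c - 1/N := by linarith
    rw [div_le_iff₀ hcN] at hR₀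
    nlinarith [one_div_pos.mpr hN0]
  have hfb : V₀ + 1 ≤ Mfun c q b := by
    have hcb : c - b = c / (R + 1) := by
      rw [hb]
      field_simp
      ring
    have hbb : b / (c - b) = R := by
      rw [hcb, hb]
      rw [div_div_div_comm, div_self (by linarith : R + 1 ≠ 0), div_one]
      field_simp
    have hRV : (V₀ + 1) ^ (q⁻¹ : ℝ) ≤ R := le_trans (le_max_right _ _) (le_max_right _ _)
    have : ((V₀ + 1) ^ (q⁻¹ : ℝ)) ^ q ≤ R ^ q :=
      Real.rpow_le_rpow (Real.rpow_nonneg (by linarith) _) hRV hq0.le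
    rw [Real.rpow_inv_rpow (by linarith) (ne_of_gt hq0)] at this
    have hMb : Mfun c q b = (b / (c - b)) ^ q := rfl
    rwa [hMb, hbb]
  -- compact set
  set K : Set (Fin N → ℝ) :=
    (Set.univ.pi fun _ : Fin N => Icc (0:ℝ) b) ∩ {t | ∑ i, t i = 1} with hK
  have hKc : IsCompact K := by
    apply IsCompact.inter_right (isCompact_univ_pi fun i => isCompact_Icc)
    exact isClosed_eq (continuous_finset_sum _ fun i _ => continuous_apply i) continuous_const
  have ht₀K : t₀ ∈ K := by
    constructor
    · intro i _
      exact ⟨by positivity, hbN⟩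
    · exact ht₀sum
  have hcont : ContinuousOn (fun t : Fin N → ℝ => ∑ i, Mfun c q (t i)) K := by
    apply continuousOn_finset_sum
    intro i _
    apply (Mfun_continuousOn hq0.le).comp (continuous_apply i).continuousOn
    intro t ht
    simp only [mem_Iio]
    exact lt_of_le_of_lt ((ht.1 i (Set.mem_univ i)).2) hbc
  obtain ⟨t, htK, hmin⟩ := hKc.exists_isMinOn ⟨t₀, ht₀K⟩ hcont
  have htfeas : ∀ i, 0 ≤ t i ∧ t i < c := fun i =>
    ⟨(htK.1 i (mem_univ i)).1, lt_of_le_of_lt (htK.1 i (mem_univ i)).2 hbc⟩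
  refine ⟨t, htfeas, htK.2, ?_⟩
  intro s hs hssum
  by_cases hsb : ∀ i, s i ≤ b
  · exact hmin ⟨fun i _ => ⟨(hs i).1, hsb i⟩, hssum⟩
  · push_neg at hsb
    obtain ⟨i, hi⟩ := hsb
    have h1 : Mfun c q b ≤ Mfun c q (s i) := Mfun_mono hq0.le hb0.le hi.le (hs i).2
    have h2 : Mfun c q (s i) ≤ ∑ j, Mfun c q (s j) :=
      Finset.single_le_sum (fun j _ => Mfun_nonneg hc.le _ (hs j).1 (hs j).2) (Finset.mem_univ i)
    have h3 : ∑ j, Mfun c q (t j) ≤ V₀ := hmin ht₀K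
    linarith

end Helpers

lemma sum_update_two {N : ℕ} (g : ℝ → ℝ) (t : Fin N → ℝ) {i j : Fin N} (hij : i ≠ j)
    (u v : ℝ) :
    ∑ k, g (Function.update (Function.update t i u) j v k)
      = ∑ k, g (t k) - g (t i) - g (t j) + g u + g v := by
  classical
  have h1 : ∀ (f : Fin N → ℝ) (a : Fin N) (w : ℝ),
      ∑ k, g (Function.update f a w k) = ∑ k, g (f k) - g (f a) + g w := by
    intro f a w
    have : (fun k => g (Function.update f a w k)) = Function.update (fun k => g (f k)) a (g w) := by
      funext k
      by_cases hk : k = a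
      · subst hk; simp
      · simp [Function.update_of_ne hk]
    rw [this, Finset.sum_update_of_mem (Finset.mem_univ a)]
    rw [Finset.sum_sdiff_eq_sub (Finset.singleton_subset_iff.mpr (Finset.mem_univ a))]
    simp
    ring
  rw [h1 _ j v, h1 _ i u, Function.update_of_ne (Ne.symm hij)]
  ring

lemma exists_perm_mem_iff {N : ℕ} (s₁ s₂ : Finset (Fin N)) (h : s₁.card = s₂.card) :
    ∃ σ : Equiv.Perm (Fin N), ∀ i, σ i ∈ s₂ ↔ i ∈ s₁ := by
  classical
  have hcompl : s₁ᶜ.card = s₂ᶜ.card := by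
    simp [Finset.card_compl, h]
  let e1 : {x // x ∈ s₁} ≃ {x // x ∈ s₂} := Finset.equivOfCardEq h
  let e2 : {x // ¬ x ∈ s₁} ≃ {x // ¬ x ∈ s₂} :=
    ((Equiv.subtypeEquivRight (fun x => (Finset.mem_compl).symm)).trans
      (Finset.equivOfCardEq hcompl)).trans
      (Equiv.subtypeEquivRight (fun x => Finset.mem_compl))
  let σ : Equiv.Perm (Fin N) :=
    ((Equiv.sumCompl (· ∈ s₁)).symm.trans (e1.sumCongr e2)).trans (Equiv.sumCompl (· ∈ s₂))
  refine ⟨σ, fun i => ?_⟩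
  by_cases hi : i ∈ s₁
  · have : σ i = ((e1 ⟨i, hi⟩ : {x // x ∈ s₂}) : Fin N) := by
      simp only [σ, Equiv.trans_apply, Equiv.sumCompl_symm_apply_of_pos hi,
        Equiv.sumCongr_apply, Sum.map_inl, Equiv.sumCompl_apply_inl]
    rw [this]
    simp [hi, (e1 ⟨i, hi⟩).2]
  · have : σ i = ((e2 ⟨i, hi⟩ : {x // ¬ x ∈ s₂}) : Fin N) := by
      simp only [σ, Equiv.trans_apply, Equiv.sumCompl_symm_apply_of_neg hi,
        Equiv.sumCongr_apply, Sum.map_inr, Equiv.sumCompl_apply_inr]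
    rw [this]
    simp [hi, (e2 ⟨i, hi⟩).2]

lemma card_filter_coe_lt {N k : ℕ} (hk : k ≤ N) :
    (Finset.univ.filter fun i : Fin N => (i : ℕ) < k).card = k := by
  classical
  apply Finset.card_eq_of_bijective (fun j hj => (⟨j, lt_of_lt_of_le hj hk⟩ : Fin N))
  · intro a ha
    simp only [Finset.mem_filter] at ha
    exact ⟨a, ha.2, by simp⟩
  · intro j hj
    simp [hj]
  · intro i j hi hj hij
    simpa using congrArg Fin.val hij


set_option maxHeartbeats 2000000 in
/-- For `p ∈ [1, 2]`, `m ≥ 1`, `N > m` and `α = (1/m)(1/2 - p/4)`, the minimum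
`M(1/m, p, N)` of `∑ᵢ (tᵢ/(1/m - tᵢ))^{p/2}` over tuples with `tᵢ ∈ [0, 1/m)` and
`∑ tᵢ = 1` is attained at a tuple which, after permuting coordinates, has one of the
forms: (i) `t₁ = ⋯ = t_k = 1/k`, rest `0`, with `1/k ≥ α`; or (ii) `t₁ = ⋯ = t_k = x`,
`t_{k+1} = 1 - kx`, rest `0`, with `x ≥ α` and `0 < 1 - kx < α`. -/
theorem M_minimizer_structure (N m : ℕ) (hm : 1 ≤ m) (hmN : m < N)
    (p : ℝ) (hp1 : 1 ≤ p) (hp2 : p ≤ 2) :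
    ∃ t : Fin N → ℝ,
      (∀ i, 0 ≤ t i ∧ t i < 1 / (m : ℝ)) ∧ (∑ i, t i = 1) ∧
      (∀ s : Fin N → ℝ, (∀ i, 0 ≤ s i ∧ s i < 1 / (m : ℝ)) → (∑ i, s i = 1) →
        ∑ i, (t i / (1 / (m : ℝ) - t i)) ^ (p / 2) ≤
          ∑ i, (s i / (1 / (m : ℝ) - s i)) ^ (p / 2)) ∧
      ∃ σ : Equiv.Perm (Fin N),
        (∃ k : ℕ, 0 < k ∧ 1 / (m : ℝ) * (1 / 2 - p / 4) ≤ 1 / (k : ℝ) ∧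
          ∀ i : Fin N, t (σ i) = if (i : ℕ) < k then 1 / (k : ℝ) else 0) ∨
        (∃ k : ℕ, ∃ x : ℝ, 1 / (m : ℝ) * (1 / 2 - p / 4) ≤ x ∧
          0 < 1 - (k : ℝ) * x ∧ 1 - (k : ℝ) * x < 1 / (m : ℝ) * (1 / 2 - p / 4) ∧
          ∀ i : Fin N, t (σ i) =
            if (i : ℕ) < k then x else if (i : ℕ) = k then 1 - (k : ℝ) * x else 0) := by
  classical
  set c : ℝ := 1 / (m : ℝ) with hcdef
  set q : ℝ := p / 2 with hqdef
  set α : ℝ := c * (1 - q) / 2 with hαdef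
  have hm0 : (0:ℝ) < m := by exact_mod_cast hm
  have hmN' : (m:ℝ) < N := by exact_mod_cast hmN
  have hN0 : (0:ℝ) < N := by linarith
  have hc : 0 < c := by rw [hcdef]; positivity
  have hc1 : c ≤ 1 := by
    rw [hcdef, div_le_one hm0]
    exact_mod_cast hm
  have hq0 : 0 < q := by rw [hqdef]; linarith
  have hqh : 1/2 ≤ q := by rw [hqdef]; linarith
  have hq1 : q ≤ 1 := by rw [hqdef]; linarith
  have hα0 : 0 ≤ α := by rw [hαdef]; nlinarith
  have hα4 : α ≤ c / 4 := by rw [hαdef]; nlinarith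
  have hαc : α < c := by nlinarith
  have hαeq : 1 / (m:ℝ) * (1/2 - p/4) = α := by rw [hαdef, hcdef, hqdef]; ring
  have hNc : 1 / (N:ℝ) < c := by
    rw [hcdef]
    exact one_div_lt_one_div_of_lt hm0 hmN'
  obtain ⟨t, hfeas, hsum, hmin⟩ := exists_minimizer N (by omega) hc hq0 hNc
  -- the key perturbation principle
  have hpert : ∀ i j : Fin N, i ≠ j → ∀ u v : ℝ, 0 ≤ u → u < c → 0 ≤ v → v < c →
      u + v = t i + t j →
      Mfun c q (t i) + Mfun c q (t j) ≤ Mfun c q u + Mfun c q v := by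
    intro i j hij u v hu huc hv hvc huv
    set s := Function.update (Function.update t i u) j v with hs
    have hsi : s i = u := by
      rw [hs, Function.update_of_ne hij, Function.update_self]
    have hsj : s j = v := by rw [hs, Function.update_self]
    have hsother : ∀ k, k ≠ i → k ≠ j → s k = t k := by
      intro k hki hkj
      rw [hs, Function.update_of_ne hkj, Function.update_of_ne hki]
    have hsfeas : ∀ k, 0 ≤ s k ∧ s k < c := by
      intro k
      by_cases hkj : k = j
      · subst hkj; rw [hsj]; exact ⟨hv, hvc⟩
      · by_cases hki : k = i
        · subst hki; rw [hsi]; exact ⟨hu, huc⟩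
        · rw [hsother k hki hkj]; exact hfeas k
    have hid := sum_update_two (fun x => x) t hij u v
    have hssum : ∑ k, s k = 1 := by
      rw [hs, hid, hsum]; linarith
    have h := hmin s hsfeas hssum
    have h2 := sum_update_two (Mfun c q) t hij u v
    rw [hs, h2] at h
    linarith
  -- coordinates in the convex region are all equal
  have hconv : ∀ i j : Fin N, i ≠ j → α ≤ t i → α ≤ t j → t i = t j := by
    intro i j hij hi hj
    by_contra hne
    have hu2 : (t i + t j)/2 < c := by
      have h1 := (hfeas i).2; have h2 := (hfeas j).2; linarith
    have hcx := (Mfun_strictConvexOn hc hq0 hq1).2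
      ⟨hi, (hfeas i).2⟩ ⟨hj, (hfeas j).2⟩ hne
      (show (0:ℝ) < 1/2 by norm_num) (show (0:ℝ) < 1/2 by norm_num) (by norm_num)
    have hcomb : (1/2 : ℝ) • t i + (1/2 : ℝ) • t j = (t i + t j)/2 := by
      simp only [smul_eq_mul]; ring
    rw [hcomb] at hcx
    simp only [smul_eq_mul] at hcx
    have hp' := hpert i j hij ((t i + t j)/2) ((t i + t j)/2)
      (by have := (hfeas i).1; have := (hfeas j).1; linarith) hu2
      (by have := (hfeas i).1; have := (hfeas j).1; linarith) hu2 (by ring)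
    linarith
  -- at most one coordinate strictly inside the concave region
  have hconc : ∀ i j : Fin N, i ≠ j → 0 < t i → t i < α → 0 < t j → t j < α → False := by
    intro i j hij hti0 htiα htj0 htjα
    have hT0 : 0 < t i + t j := by linarith
    have hT2α : t i + t j < 2 * α := by linarith
    have hcave := Mfun_strictConcaveOn (c := c) (q := q) hc hq0 hq1
    by_cases hTα : t i + t j ≤ α
    · have hmem0 : (0:ℝ) ∈ Icc 0 α := ⟨le_refl 0, hα0⟩
      have hmemT : t i + t j ∈ Icc 0 α := ⟨hT0.le, hTα⟩
      have h1 := hcave.2 hmem0 hmemT hT0.ne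
        (show 0 < t j / (t i + t j) by positivity)
        (show 0 < t i / (t i + t j) by positivity) (by field_simp; ring)
      have h2 := hcave.2 hmem0 hmemT hT0.ne
        (show 0 < t i / (t i + t j) by positivity)
        (show 0 < t j / (t i + t j) by positivity) (by field_simp)
      have e1 : (t j / (t i + t j)) • (0:ℝ) + (t i / (t i + t j)) • (t i + t j) = t i := by
        simp only [smul_eq_mul]; field_simp; ring
      have e2 : (t i / (t i + t j)) • (0:ℝ) + (t j / (t i + t j)) • (t i + t j) = t j := by
        simp only [smul_eq_mul]; field_simp; ring
      rw [e1] at h1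
      rw [e2] at h2
      simp only [smul_eq_mul] at h1 h2
      rw [Mfun_zero (ne_of_gt hq0), mul_zero, zero_add] at h1 h2
      have hp' := hpert i j hij (t i + t j) 0 hT0.le (lt_of_le_of_lt hTα hαc) le_rfl hc
        (by ring)
      rw [Mfun_zero (ne_of_gt hq0)] at hp'
      have hmulsum : t i / (t i + t j) * Mfun c q (t i + t j)
          + t j / (t i + t j) * Mfun c q (t i + t j) = Mfun c q (t i + t j) := by
        field_simp
      linarith
    · push_neg at hTα
      have hden : 0 < 2*α - (t i + t j) := by linarith
      have hx₀ : t i + t j - α ∈ Icc 0 α := ⟨by linarith, by linarith⟩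
      have hy₀ : α ∈ Icc 0 α := ⟨hα0, le_rfl⟩
      have hxy : t i + t j - α ≠ α := by
        intro h; nlinarith
      set lam := (α - t i)/(2*α - (t i + t j)) with hlam
      have hlam0 : 0 < lam := div_pos (by linarith) hden
      have hlam1 : lam < 1 := by
        rw [hlam, div_lt_one hden]; linarith
      have h1 := hcave.2 hx₀ hy₀ hxy (show 0 < lam from hlam0)
        (show 0 < 1 - lam by linarith) (by ring)
      have h2 := hcave.2 hx₀ hy₀ hxy (show 0 < 1 - lam by linarith)
        (show 0 < lam from hlam0) (by ring)
      have hcancel : lam * (2*α - (t i + t j)) = α - t i := by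
        rw [hlam]; exact div_mul_cancel₀ _ (ne_of_gt hden)
      have e1 : lam • (t i + t j - α) + (1 - lam) • α = t i := by
        simp only [smul_eq_mul]
        linear_combination (-1 : ℝ) * hcancel
      have e2 : (1 - lam) • (t i + t j - α) + lam • α = t j := by
        simp only [smul_eq_mul]
        linear_combination hcancel
      rw [e1] at h1
      rw [e2] at h2
      simp only [smul_eq_mul] at h1 h2
      have hp' := hpert i j hij (t i + t j - α) α (by linarith) (by linarith) hα0 hαc
        (by ring)
      linarith
  -- group structure
  set B := Finset.univ.filter (fun i => α ≤ t i) with hB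
  set k := B.card with hk
  have hkN : k ≤ N := by
    rw [hk]
    simpa using Finset.card_le_univ B
  set Y := Finset.univ.filter (fun i => 0 < t i ∧ t i < α) with hY
  have hBY : Disjoint B Y := by
    rw [Finset.disjoint_left]
    intro a haB haY
    rw [hB, Finset.mem_filter] at haB
    rw [hY, Finset.mem_filter] at haY
    linarith [haB.2, haY.2.2]
  have hY1 : Y.card ≤ 1 := by
    rw [Finset.card_le_one]
    intro a ha b hb
    by_contra hab
    rw [hY, Finset.mem_filter] at ha hb
    exact hconc a b hab ha.2.1 ha.2.2 hb.2.1 hb.2.2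
  have hzero : ∀ i, i ∉ B → i ∉ Y → t i = 0 := by
    intro i hiB hiY
    rw [hB, Finset.mem_filter] at hiB
    rw [hY, Finset.mem_filter] at hiY
    push_neg at hiB hiY
    have h0 := (hfeas i).1
    rcases lt_or_eq_of_le h0 with h | h
    · exact absurd (hiY (Finset.mem_univ i) h) (not_le.mpr (lt_of_not_ge
        (fun hle => (hiB (Finset.mem_univ i)).not_ge hle)))
    · exact h.symm
  have hsum_dec : ∑ i ∈ B, t i + ∑ i ∈ Y, t i = 1 := by
    rw [← Finset.sum_union hBY, ← hsum]
    apply Finset.sum_subset (Finset.subset_univ _)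
    intro i _ hiBY
    rw [Finset.mem_union] at hiBY
    push_neg at hiBY
    exact hzero i hiBY.1 hiBY.2
  have hBne : B.Nonempty := by
    by_contra hBe
    rw [Finset.not_nonempty_iff_eq_empty] at hBe
    rw [hBe] at hsum_dec
    simp only [Finset.sum_empty, zero_add] at hsum_dec
    rcases Finset.eq_empty_or_nonempty Y with hYe | ⟨a, ha⟩
    · rw [hYe] at hsum_dec; simp at hsum_dec
    · have hYa : Y = {a} := Finset.eq_singleton_iff_unique_mem.mpr
        ⟨ha, fun b hb => Finset.card_le_one.mp hY1 b hb a ha⟩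
      rw [hYa] at hsum_dec
      simp only [Finset.sum_singleton] at hsum_dec
      rw [hY, Finset.mem_filter] at ha
      linarith [ha.2.2]
  obtain ⟨i₀, hi₀⟩ := hBne
  have hxα : α ≤ t i₀ := by
    rw [hB, Finset.mem_filter] at hi₀; exact hi₀.2
  have hxc : t i₀ < c := (hfeas i₀).2
  have hxB : ∀ i ∈ B, t i = t i₀ := by
    intro i hi
    by_cases h : i = i₀
    · rw [h]
    · exact hconv i i₀ h (by rw [hB, Finset.mem_filter] at hi; exact hi.2) hxα
  have hk0 : 0 < k := by
    rw [hk]; exact Finset.card_pos.mpr ⟨i₀, hi₀⟩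
  have hkR0 : (0:ℝ) < k := by exact_mod_cast hk0
  have hsumB : ∑ i ∈ B, t i = k * t i₀ := by
    rw [Finset.sum_congr rfl hxB, Finset.sum_const, hk, nsmul_eq_mul]
  rcases Finset.eq_empty_or_nonempty Y with hYe | hYne
  · -- form (i)
    have hsum1 : (k:ℝ) * t i₀ = 1 := by
      rw [hYe] at hsum_dec
      simp only [Finset.sum_empty, add_zero] at hsum_dec
      rw [← hsumB]; exact hsum_dec
    have hxval : t i₀ = 1 / k := by
      field_simp
      linarith
    obtain ⟨σ, hσ⟩ := exists_perm_mem_iff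
      (Finset.univ.filter fun i : Fin N => (i:ℕ) < k) B
      (by rw [card_filter_coe_lt hkN, hk])
    refine ⟨t, hfeas, hsum, fun s hs hssum => hmin s hs hssum, σ,
      Or.inl ⟨k, hk0, ?_, ?_⟩⟩
    · rw [hαeq, ← hxval]; exact hxα
    · intro i
      by_cases hik : (i:ℕ) < k
      · rw [if_pos hik, ← hxval]
        exact hxB _ ((hσ i).mpr (by simp [hik]))
      · rw [if_neg hik]
        apply hzero
        · intro hmem
          have := (hσ i).mp hmem
          rw [Finset.mem_filter] at this
          exact hik this.2
        · rw [hYe]; exact Finset.notMem_empty _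
  · -- form (ii)
    obtain ⟨j₀, hj₀⟩ := hYne
    have hYj : Y = {j₀} := Finset.eq_singleton_iff_unique_mem.mpr
      ⟨hj₀, fun b hb => Finset.card_le_one.mp hY1 b hb j₀ hj₀⟩
    have hy : 0 < t j₀ ∧ t j₀ < α := by
      rw [hY, Finset.mem_filter] at hj₀; exact hj₀.2
    have hsum2 : (k:ℝ) * t i₀ + t j₀ = 1 := by
      rw [hYj] at hsum_dec
      simp only [Finset.sum_singleton] at hsum_dec
      rw [← hsumB]; exact hsum_dec
    have hj₀B : j₀ ∉ B := by
      rw [hB, Finset.mem_filter]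
      push_neg
      intro _
      linarith [hy.2]
    have hcard : (insert j₀ B).card = k + 1 := by
      rw [Finset.card_insert_of_notMem hj₀B, hk]
    have hk1N : k + 1 ≤ N := by
      rw [← hcard]
      simpa using Finset.card_le_univ (insert j₀ B)
    obtain ⟨σ₁, hσ₁⟩ := exists_perm_mem_iff
      (Finset.univ.filter fun i : Fin N => (i:ℕ) < k + 1) (insert j₀ B)
      (by rw [card_filter_coe_lt hk1N, hcard])
    have hkN' : k < N := hk1N
    set a : Fin N := ⟨k, hkN'⟩ with ha
    set b : Fin N := σ₁.symm j₀ with hbdef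
    have hσ₁b : σ₁ b = j₀ := Equiv.apply_symm_apply σ₁ j₀
    have hbk : (b:ℕ) < k + 1 := by
      have hmem : σ₁ b ∈ insert j₀ B := by
        rw [hσ₁b]; exact Finset.mem_insert_self _ _
      have := (hσ₁ b).mp hmem
      rw [Finset.mem_filter] at this
      exact this.2
    set σ : Equiv.Perm (Fin N) := (Equiv.swap a b).trans σ₁ with hσdef
    have hyval : (1:ℝ) - k * t i₀ = t j₀ := by linarith
    refine ⟨t, hfeas, hsum, fun s hs hssum => hmin s hs hssum, σ,
      Or.inr ⟨k, t i₀, ?_, ?_, ?_, ?_⟩⟩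
    · rw [hαeq]; exact hxα
    · rw [hyval]; exact hy.1
    · rw [hαeq, hyval]; exact hy.2
    · intro i
      by_cases hik : (i:ℕ) < k
      · rw [if_pos hik]
        have hia : i ≠ a := by
          intro h
          rw [h] at hik
          simp [ha] at hik
        have hmemne : σ i ∈ insert j₀ B ∧ σ i ≠ j₀ := by
          by_cases hib : i = b
          · have hab : a ≠ b := by
              intro h
              rw [← h] at hib
              exact hia hib
            have hσi : σ i = σ₁ a := by
              rw [hσdef, hib]
              simp [Equiv.swap_apply_right]
            constructor
            · rw [hσi]
              exact (hσ₁ a).mpr (by rw [Finset.mem_filter]; exact ⟨Finset.mem_univ _, by simp [ha]⟩)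
            · rw [hσi, ← hσ₁b]
              intro h
              exact hab (σ₁.injective h)
          · have hσi : σ i = σ₁ i := by
              rw [hσdef]
              simp [Equiv.swap_apply_of_ne_of_ne hia hib]
            constructor
            · rw [hσi]
              exact (hσ₁ i).mpr (by rw [Finset.mem_filter]; exact ⟨Finset.mem_univ _, by omega⟩)
            · rw [hσi, ← hσ₁b]
              intro h
              exact hib (σ₁.injective h)
        have hmemB : σ i ∈ B := by
          rcases Finset.mem_insert.mp hmemne.1 with h | h
          · exact absurd h hmemne.2
          · exact h
        exact hxB _ hmemB
      · by_cases hik2 : (i:ℕ) = k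
        · rw [if_neg hik, if_pos hik2]
          have hiaeq : i = a := Fin.ext (by simp [ha, hik2])
          have hσa : σ i = j₀ := by
            rw [hσdef, hiaeq]
            simp [Equiv.swap_apply_left, hσ₁b]
          rw [hσa, hyval]
        · rw [if_neg hik, if_neg hik2]
          have hik3 : k + 1 ≤ (i:ℕ) := by omega
          have hia : i ≠ a := by
            intro h
            rw [h] at hik2
            simp [ha] at hik2
          have hib : i ≠ b := by
            intro h
            rw [h] at hik3
            omega
          have hσi : σ i = σ₁ i := by
            rw [hσdef]
            simp [Equiv.swap_apply_of_ne_of_ne hia hib]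
          have hnot : σ i ∉ insert j₀ B := by
            rw [hσi]
            intro hmem
            have := (hσ₁ i).mp hmem
            rw [Finset.mem_filter] at this
            omega
          apply hzero
          · intro h
            exact hnot (Finset.mem_insert_of_mem h)
          · rw [hYj]
            intro h
            rw [Finset.mem_singleton] at h
            exact hnot (h ▸ Finset.mem_insert_self _ _)
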